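/- Let f:{0,1}^n→{0,1} be a symmetric Boolean function such that f̃(w) = 0 for every w ∈ {0,1}^n with n/8 ≤ |w| ≤ 7n/8, and let f_s denote the common value of f on inputs of Hamming weight s. Then for every odd prime p with n/8 ≤ p ≤ n/2 and every integer s with 0 ≤ s ≤ n − 2p, it holds that f_s = f_{s+2p}. -/

import Mathlib

namespace SymXOR

/-- Hamming weight of a Boolean vector. -/
def hammingWeight {n : ℕ} (x : Fin n → Bool) : ℕ :=
  (Finset.univ.filter fun i => x i = true).card

/-- The inner product `x·w = Σ_i x_i w_i` of two Boolean vectors. -/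
def dotProd {n : ℕ} (x w : Fin n → Bool) : ℕ :=
  (Finset.univ.filter fun i => x i = true ∧ w i = true).card

/-- A Boolean value viewed as a real number. -/
noncomputable def boolToReal (b : Bool) : ℝ := if b then 1 else 0

/-- The Fourier coefficient `f̃(w) = 2^{-n} Σ_x (-1)^{x·w} f(x)`. -/
noncomputable def fourierCoeff {n : ℕ} (f : (Fin n → Bool) → Bool) (w : Fin n → Bool) : ℝ :=
  (1 / 2 ^ n) * ∑ x : Fin n → Bool, (-1 : ℝ) ^ dotProd x w * boolToReal (f x)

/-! ### Auxiliary machinery -/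

open Polynomial

/-- A Boolean value viewed as an integer. -/
def fb (b : Bool) : ℤ := if b then 1 else 0

/-- The (unnormalized, integer) Fourier coefficient. -/
def Aint {n : ℕ} (f : (Fin n → Bool) → Bool) (w : Fin n → Bool) : ℤ :=
  ∑ y : Fin n → Bool, (-1) ^ dotProd y w * fb (f y)

/-- Indicator vector of the first `t` coordinates. -/
def xvec (n t : ℕ) : Fin n → Bool := fun i => decide (i.val < t)

lemma card_filter_lt (n t : ℕ) (h : t ≤ n) :
    (Finset.univ.filter fun i : Fin n => i.val < t).card = t := by
  have : (Finset.univ.filter fun i : Fin n => i.val < t) =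
      (Finset.range t).attachFin (fun m hm => lt_of_lt_of_le (Finset.mem_range.mp hm) h) := by
    ext i
    simp [Finset.mem_attachFin]
  rw [this, Finset.card_attachFin, Finset.card_range]

lemma hammingWeight_xvec (n t : ℕ) (h : t ≤ n) : hammingWeight (xvec n t) = t := by
  unfold hammingWeight xvec
  simp only [decide_eq_true_eq]
  exact card_filter_lt n t h

lemma hammingWeight_le {n : ℕ} (w : Fin n → Bool) : hammingWeight w ≤ n := by
  classical
  calc hammingWeight w ≤ Finset.univ.card := Finset.card_filter_le _ _
  _ = n := by simp

lemma neg_one_pow_dotProd {n : ℕ} (x w : Fin n → Bool) (R : Type*) [CommRing R] :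
    ((-1 : R) ^ dotProd x w) = ∏ i : Fin n, (if x i = true ∧ w i = true then (-1 : R) else 1) := by
  unfold dotProd
  rw [Finset.card_filter, ← Finset.prod_pow_eq_pow_sum]
  exact Finset.prod_congr rfl fun i _ => by by_cases h : x i = true ∧ w i = true <;> simp [h]

lemma orth {n : ℕ} (x y : Fin n → Bool) :
    ∑ w : Fin n → Bool, ((-1 : ℤ) ^ dotProd x w * (-1) ^ dotProd y w)
      = if x = y then 2 ^ n else 0 := by
  classical
  have key : ∀ w : Fin n → Bool, ((-1 : ℤ) ^ dotProd x w * (-1) ^ dotProd y w)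
      = ∏ i : Fin n, ((if x i = true ∧ w i = true then (-1 : ℤ) else 1) *
          (if y i = true ∧ w i = true then (-1 : ℤ) else 1)) := by
    intro w
    rw [neg_one_pow_dotProd, neg_one_pow_dotProd, Finset.prod_mul_distrib]
  simp only [key]
  rw [← Fintype.prod_sum (fun (i : Fin n) (b : Bool) =>
    ((if x i = true ∧ b = true then (-1 : ℤ) else 1) *
     (if y i = true ∧ b = true then (-1 : ℤ) else 1)))]
  have factor : ∀ i : Fin n, (∑ b : Bool,
      ((if x i = true ∧ b = true then (-1 : ℤ) else 1) *
       (if y i = true ∧ b = true then (-1 : ℤ) else 1)))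
      = if x i = y i then 2 else 0 := by
    intro i
    cases hx : x i <;> cases hy : y i <;> simp [Fintype.sum_bool]
  simp only [factor]
  by_cases h : x = y
  · subst h; simp [Finset.prod_const]
  · have : ∃ i, x i ≠ y i := by
      by_contra hc
      push_neg at hc
      exact h (funext hc)
    obtain ⟨i, hi⟩ := this
    rw [if_neg h]
    exact Finset.prod_eq_zero (Finset.mem_univ i) (by simp [hi])

lemma inversion {n : ℕ} (f : (Fin n → Bool) → Bool) (x : Fin n → Bool) :
    ∑ w : Fin n → Bool, Aint f w * (-1) ^ dotProd x w = 2 ^ n * fb (f x) := by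
  unfold Aint
  simp only [Finset.sum_mul]
  rw [Finset.sum_comm]
  have : ∀ y : Fin n → Bool,
      (∑ w : Fin n → Bool, (-1 : ℤ) ^ dotProd y w * fb (f y) * (-1) ^ dotProd x w)
      = fb (f y) * if y = x then 2 ^ n else 0 := by
    intro y
    rw [← orth y x, Finset.mul_sum]
    exact Finset.sum_congr rfl fun w _ => by ring
  simp only [this]
  simp only [mul_ite, mul_zero]
  rw [Finset.sum_ite_eq' Finset.univ x (fun y => fb (f y) * 2 ^ n)]
  simp [mul_comm]

lemma card_comp_perm {n : ℕ} (σ : Equiv.Perm (Fin n)) (P : Fin n → Prop) [DecidablePred P] :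
    (Finset.univ.filter fun i => P (σ i)).card = (Finset.univ.filter P).card := by
  apply Finset.card_bij (fun i _ => σ i)
  · intro a ha; simp at ha ⊢; exact ha
  · intro a _ b _ h; exact σ.injective h
  · intro b hb
    refine ⟨σ.symm b, ?_, by simp⟩
    simp at hb ⊢; exact hb

lemma hammingWeight_comp {n : ℕ} (σ : Equiv.Perm (Fin n)) (y : Fin n → Bool) :
    hammingWeight (fun i => y (σ i)) = hammingWeight y :=
  card_comp_perm σ (fun i => y i = true)

lemma dotProd_comp {n : ℕ} (σ : Equiv.Perm (Fin n)) (y w : Fin n → Bool) :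
    dotProd (fun i => y (σ i)) (fun i => w (σ i)) = dotProd y w :=
  card_comp_perm σ (fun i => y i = true ∧ w i = true)

/-- there is a permutation matching two vectors of the same weight -/
lemma exists_perm {n : ℕ} (w w' : Fin n → Bool) (h : hammingWeight w = hammingWeight w') :
    ∃ σ : Equiv.Perm (Fin n), ∀ i, w' i = w (σ i) := by
  classical
  have hc : Fintype.card {i : Fin n // w' i = true} = Fintype.card {i : Fin n // w i = true} := by
    rw [Fintype.card_subtype, Fintype.card_subtype]
    exact h.symm
  have hc' : Fintype.card {i : Fin n // ¬ w' i = true}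
      = Fintype.card {i : Fin n // ¬ w i = true} := by
    rw [Fintype.card_subtype_compl, Fintype.card_subtype_compl, hc]
  obtain ⟨e⟩ := Fintype.card_eq.mp hc
  obtain ⟨e'⟩ := Fintype.card_eq.mp hc'
  refine ⟨Equiv.subtypeCongr e e', fun i => ?_⟩
  by_cases hi : w' i = true
  · have : Equiv.subtypeCongr e e' i = (e ⟨i, hi⟩ : Fin n) := by
      simp only [Equiv.subtypeCongr, Equiv.trans_apply, Equiv.sumCongr_apply]
      rw [Equiv.sumCompl_symm_apply_of_pos (p := fun x => w' x = true) hi]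
      rfl
    rw [this, hi, (e ⟨i, hi⟩).2]
  · have : Equiv.subtypeCongr e e' i = (e' ⟨i, hi⟩ : Fin n) := by
      simp only [Equiv.subtypeCongr, Equiv.trans_apply, Equiv.sumCongr_apply]
      rw [Equiv.sumCompl_symm_apply_of_neg (p := fun x => w' x = true) hi]
      rfl
    rw [this]
    have h2 := (e' ⟨i, hi⟩).2
    simp only [Bool.not_eq_true] at hi h2
    rw [hi, h2]

lemma Aint_eq_of_weight_eq {n : ℕ} (f : (Fin n → Bool) → Bool) (F : ℕ → Bool)
    (hsymm : ∀ x, f x = F (hammingWeight x)) (w w' : Fin n → Bool)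
    (h : hammingWeight w = hammingWeight w') : Aint f w = Aint f w' := by
  classical
  obtain ⟨σ, hσ⟩ := exists_perm w w' h
  have hw' : w' = fun i => w (σ i) := funext hσ
  unfold Aint
  rw [hw']
  apply Finset.sum_nbij' (fun y => fun i => y (σ i)) (fun y => fun i => y (σ.symm i))
  · intros; exact Finset.mem_univ _
  · intros; exact Finset.mem_univ _
  · intro y _; funext i; simp
  · intro y _; funext i; simp
  · intro y _
    rw [dotProd_comp σ y w, hsymm, hsymm (fun i => y (σ i)), hammingWeight_comp]

/-- signed count of weight-`k` vectors against the indicator of the first `t` coordinates -/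
def Kw (n t k : ℕ) : ℤ :=
  ∑ w ∈ Finset.univ.filter (fun w : Fin n → Bool => hammingWeight w = k),
    (-1) ^ dotProd (xvec n t) w

lemma genfun (n t : ℕ) (h : t ≤ n) :
    ∑ w : Fin n → Bool, ((-1 : ℤ[X]) ^ dotProd (xvec n t) w) * X ^ hammingWeight w
      = (1 - X) ^ t * (1 + X) ^ (n - t) := by
  classical
  have key : ∀ w : Fin n → Bool,
      ((-1 : ℤ[X]) ^ dotProd (xvec n t) w) * X ^ hammingWeight w
        = ∏ i : Fin n, (if w i = true then (if (i : ℕ) < t then -X else X) else 1) := by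
    intro w
    rw [neg_one_pow_dotProd, hammingWeight, Finset.card_filter,
      ← Finset.prod_pow_eq_pow_sum, ← Finset.prod_mul_distrib]
    apply Finset.prod_congr rfl
    intro i _
    cases hw : w i
    · simp [xvec, hw]
    · by_cases ht : (i : ℕ) < t <;> simp [xvec, hw, ht]
  simp only [key]
  rw [← Fintype.prod_sum (fun (i : Fin n) (b : Bool) =>
      (if b = true then (if (i : ℕ) < t then -X else (X : ℤ[X])) else 1))]
  have factor : ∀ i : Fin n,
      (∑ b : Bool, (if b = true then (if (i : ℕ) < t then -X else (X : ℤ[X])) else 1))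
      = if (i : ℕ) < t then 1 - X else 1 + X := by
    intro i
    by_cases ht : (i : ℕ) < t <;> simp [Fintype.sum_bool, ht] <;> ring
  simp only [factor]
  rw [Finset.prod_ite (fun _ => (1 - X : ℤ[X])) (fun _ => (1 + X : ℤ[X]))]
  rw [Finset.prod_const, Finset.prod_const, card_filter_lt n t h]
  congr 2
  rw [Finset.filter_not, Finset.card_sdiff_of_subset (Finset.filter_subset _ _)]
  rw [card_filter_lt n t h, Finset.card_univ, Fintype.card_fin]

lemma Kw_eq_coeff (n t k : ℕ) (h : t ≤ n) :
    Kw n t k = ((1 - X) ^ t * (1 + X) ^ (n - t) : ℤ[X]).coeff k := by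
  classical
  rw [← genfun n t h, finset_sum_coeff]
  unfold Kw
  rw [Finset.sum_filter]
  apply Finset.sum_congr rfl
  intro w _
  have : ((-1 : ℤ[X]) ^ dotProd (xvec n t) w) = C ((-1 : ℤ) ^ dotProd (xvec n t) w) := by
    simp
  rw [this, coeff_C_mul, coeff_X_pow]
  by_cases hw : hammingWeight w = k
  · simp [hw]
  · rw [if_neg hw, if_neg (fun hh : k = hammingWeight w => hw hh.symm), mul_zero]

lemma natDegree_G {R : Type*} [CommRing R] (a b : ℕ) :
    ((1 - X) ^ a * (1 + X) ^ b : R[X]).natDegree ≤ a + b := by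
  apply le_trans (natDegree_mul_le)
  have h1 : ((1 - X : R[X])).natDegree ≤ 1 :=
    le_trans (natDegree_sub_le _ _) (by simp [natDegree_X_le])
  have h2 : ((1 + X : R[X])).natDegree ≤ 1 :=
    le_trans (natDegree_add_le _ _) (by simp [natDegree_X_le])
  calc ((1-X:R[X])^a).natDegree + ((1+X:R[X])^b).natDegree
      ≤ a * 1 + b * 1 := add_le_add
        (le_trans (natDegree_pow_le) (Nat.mul_le_mul_left a h1))
        (le_trans (natDegree_pow_le) (Nat.mul_le_mul_left b h2))
    _ = a + b := by ring

lemma zmod_key (p n s k : ℕ) (hp : p.Prime) (hodd : Odd p) (hs : s + 2 * p ≤ n)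
    (hk : k < p ∨ n < k + p) :
    (((1 - X) ^ (s + 2 * p) * (1 + X) ^ (n - (s + 2 * p)) : (ZMod p)[X])).coeff k
      = (((1 - X) ^ s * (1 + X) ^ (n - s) : (ZMod p)[X])).coeff k := by
  haveI : Fact p.Prime := ⟨hp⟩
  have hXp : ((1 + X : (ZMod p)[X])) ^ p = 1 + X ^ p := by
    rw [add_pow_char, one_pow]
  have hXm : ((1 - X : (ZMod p)[X])) ^ p = 1 - X ^ p := by
    have : (1 - X : (ZMod p)[X]) = 1 + (-X) := by ring
    rw [this, add_pow_char, one_pow, hodd.neg_pow]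
    ring
  set G' : (ZMod p)[X] := (1 - X) ^ (s + 2 * p) * (1 + X) ^ (n - (s + 2 * p)) with hG'
  set G : (ZMod p)[X] := (1 - X) ^ s * (1 + X) ^ (n - s) with hG
  have key : G' * (1 + X ^ p) ^ 2 = G * (1 - X ^ p) ^ 2 := by
    rw [← hXp, ← hXm, ← pow_mul, ← pow_mul, hG, hG']
    set a := n - (s + 2 * p) with ha
    have e1 : n - s = a + 2 * p := by omega
    rw [e1]
    ring
  have key2 : G' + (2:ℤ) • (G' * X ^ p) + G' * X ^ (2*p)
      = G + (-2:ℤ) • (G * X ^ p) + G * X ^ (2*p) := by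
    have expand : ∀ (A B : (ZMod p)[X]), A * (1 + B) ^ 2 = A + 2 * (A * B) + A * B ^ 2 := by
      intro A B; ring
    have expand' : ∀ (A B : (ZMod p)[X]), A * (1 - B) ^ 2 = A + (-2) * (A * B) + A * B ^ 2 := by
      intro A B; ring
    have hx2 : ((X : (ZMod p)[X]) ^ p) ^ 2 = X ^ (2 * p) := by rw [← pow_mul, mul_comm]
    have h1 := expand G' (X ^ p)
    have h2 := expand' G (X ^ p)
    rw [hx2] at h1 h2
    rw [key, h2] at h1
    simpa [zsmul_eq_mul] using h1.symm
  have degG' : G'.natDegree ≤ n := le_trans (natDegree_G _ _) (by omega)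
  have degG : G.natDegree ≤ n := le_trans (natDegree_G _ _) (by omega)
  rcases hk with hk | hk
  · have := congrArg (fun q : (ZMod p)[X] => q.coeff k) key2
    simp only [coeff_add, coeff_smul, coeff_mul_X_pow',
      if_neg (by omega : ¬ p ≤ k), if_neg (by omega : ¬ 2*p ≤ k),
      smul_zero, add_zero] at this
    exact this
  · have := congrArg (fun q : (ZMod p)[X] => q.coeff (k + 2*p)) key2
    have c1 : p ≤ k + 2*p := by omega
    have c2 : 2*p ≤ k + 2*p := by omega
    simp only [coeff_add, coeff_smul, coeff_mul_X_pow', if_pos c1, if_pos c2,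
      Nat.add_sub_cancel] at this
    have z1 : G'.coeff (k + 2*p) = 0 := coeff_eq_zero_of_natDegree_lt (by omega)
    have z2 : G.coeff (k + 2*p) = 0 := coeff_eq_zero_of_natDegree_lt (by omega)
    have z3 : G'.coeff (k + 2*p - p) = 0 := coeff_eq_zero_of_natDegree_lt (by omega)
    have z4 : G.coeff (k + 2*p - p) = 0 := coeff_eq_zero_of_natDegree_lt (by omega)
    rw [z1, z2, z3, z4] at this
    simpa using this

lemma kraw_congr (p n s k : ℕ) (hp : p.Prime) (hodd : Odd p) (hs : s + 2 * p ≤ n)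
    (hk : k < p ∨ n < k + p) :
    (p : ℤ) ∣ Kw n (s + 2 * p) k - Kw n s k := by
  have cast_coeff : ∀ t : ℕ, t ≤ n →
      ((Kw n t k : ℤ) : ZMod p) = ((1 - X) ^ t * (1 + X) ^ (n - t) : (ZMod p)[X]).coeff k := by
    intro t ht
    rw [Kw_eq_coeff n t k ht]
    have : ((1 - X) ^ t * (1 + X) ^ (n - t) : (ZMod p)[X])
        = ((1 - X) ^ t * (1 + X) ^ (n - t) : ℤ[X]).map (Int.castRingHom (ZMod p)) := by
      simp [Polynomial.map_mul, Polynomial.map_pow, Polynomial.map_sub, Polynomial.map_add]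
    rw [this, coeff_map]
    rfl
  rw [← ZMod.intCast_zmod_eq_zero_iff_dvd]
  push_cast
  rw [cast_coeff _ hs, cast_coeff _ (by omega), zmod_key p n s k hp hodd hs hk]
  ring

lemma fourierCoeff_eq_Aint {n : ℕ} (f : (Fin n → Bool) → Bool) (w : Fin n → Bool) :
    fourierCoeff f w = (Aint f w : ℝ) / 2 ^ n := by
  have hsum : ((∑ y : Fin n → Bool, (-1:ℤ) ^ dotProd y w * fb (f y) : ℤ) : ℝ)
      = ∑ x : Fin n → Bool, (-1 : ℝ) ^ dotProd x w * boolToReal (f x) := by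
    push_cast
    apply Finset.sum_congr rfl
    intro x _
    congr 1
    cases f x <;> simp [fb, boolToReal]
  unfold fourierCoeff Aint
  rw [← hsum]
  ring

lemma Aint_eq_zero {n : ℕ} (f : (Fin n → Bool) → Bool) (w : Fin n → Bool)
    (h : fourierCoeff f w = 0) : Aint f w = 0 := by
  rw [fourierCoeff_eq_Aint] at h
  have h2 : ((Aint f w : ℝ)) = 0 := by
    field_simp at h
    exact_mod_cast h
  exact_mod_cast h2

/-- If a symmetric Boolean function `f` (with value `F s` on inputs of
weight `s`) has vanishing Fourier coefficients on all `w` with `n/8 ≤ |w| ≤ 7n/8`, then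
for every odd prime `p` with `n/8 ≤ p ≤ n/2` and every `s` with `s + 2p ≤ n`, we have
`f_s = f_{s+2p}`. -/
theorem value_periodic_of_middle_fourier_vanish {n : ℕ}
    (f : (Fin n → Bool) → Bool) (F : ℕ → Bool)
    (hsymm : ∀ x, f x = F (hammingWeight x))
    (hzero : ∀ w : Fin n → Bool,
      (n : ℝ) / 8 ≤ (hammingWeight w : ℝ) → (hammingWeight w : ℝ) ≤ 7 * n / 8 →
        fourierCoeff f w = 0)
    (p : ℕ) (hp : p.Prime) (hodd : Odd p)
    (hp1 : (n : ℝ) / 8 ≤ (p : ℝ)) (hp2 : (p : ℝ) ≤ (n : ℝ) / 2) :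
    ∀ s : ℕ, s + 2 * p ≤ n → F s = F (s + 2 * p) := by
  classical
  intro s hs
  set B : ℕ → ℤ := fun k => Aint f (xvec n k) with hB
  -- step 1 : inversion at the two special points
  have hval : ∀ t : ℕ, t ≤ n →
      ∑ w : Fin n → Bool, Aint f w * (-1) ^ dotProd (xvec n t) w = 2 ^ n * fb (F t) := by
    intro t ht
    rw [inversion f (xvec n t), hsymm, hammingWeight_xvec n t ht]
  have key1 : ∑ w : Fin n → Bool,
      Aint f w * ((-1) ^ dotProd (xvec n (s + 2*p)) w - (-1) ^ dotProd (xvec n s) w)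
      = 2 ^ n * (fb (F (s + 2*p)) - fb (F s)) := by
    simp only [mul_sub]
    rw [Finset.sum_sub_distrib, hval (s + 2*p) hs, hval s (by omega)]
  -- step 2 : Aint depends only on the weight
  have hAw : ∀ w : Fin n → Bool, Aint f w = B (hammingWeight w) := by
    intro w
    exact Aint_eq_of_weight_eq f F hsymm w (xvec n (hammingWeight w))
      (by rw [hammingWeight_xvec n _ (hammingWeight_le w)])
  -- step 3 : fiberwise grouping
  have key2 : ∑ w : Fin n → Bool,
      Aint f w * ((-1) ^ dotProd (xvec n (s + 2*p)) w - (-1) ^ dotProd (xvec n s) w)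
      = ∑ k ∈ Finset.range (n+1), B k * (Kw n (s + 2*p) k - Kw n s k) := by
    rw [← Finset.sum_fiberwise_of_maps_to
      (g := fun w : Fin n → Bool => hammingWeight w) (t := Finset.range (n+1))
      (fun w _ => Finset.mem_range.mpr (Nat.lt_succ_of_le (hammingWeight_le w)))]
    apply Finset.sum_congr rfl
    intro k _
    have : ∀ w ∈ Finset.univ.filter (fun w : Fin n → Bool => hammingWeight w = k),
        Aint f w * ((-1) ^ dotProd (xvec n (s + 2*p)) w - (-1) ^ dotProd (xvec n s) w)
        = B k * ((-1) ^ dotProd (xvec n (s + 2*p)) w - (-1) ^ dotProd (xvec n s) w) := by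
      intro w hw
      rw [hAw w, (Finset.mem_filter.mp hw).2]
    rw [Finset.sum_congr rfl this, ← Finset.mul_sum]
    unfold Kw
    rw [Finset.sum_sub_distrib]
  -- step 4 : every term is divisible by p
  have pn : p ≤ n := by
    have : (p : ℝ) ≤ n := le_trans hp2 (by linarith [Nat.cast_nonneg (α := ℝ) n])
    exact_mod_cast this
  have n8p : (n : ℝ) ≤ 8 * p := by linarith
  have hdvd : (p : ℤ) ∣ 2 ^ n * (fb (F (s + 2*p)) - fb (F s)) := by
    rw [← key1, key2]
    apply Finset.dvd_sum
    intro k hk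
    have hkn : k ≤ n := Nat.lt_succ_iff.mp (Finset.mem_range.mp hk)
    by_cases hA : (n : ℝ) / 8 ≤ (k : ℝ)
    · by_cases hBk : (k : ℝ) ≤ 7 * n / 8
      · have : B k = 0 := by
          apply Aint_eq_zero
          apply hzero
          · rw [hammingWeight_xvec n k hkn]; exact hA
          · rw [hammingWeight_xvec n k hkn]; exact hBk
        rw [this, zero_mul]
        exact dvd_zero _
      · push_neg at hBk
        have : n < k + p := by
          have : (n : ℝ) < k + p := by linarith
          exact_mod_cast this
        exact Dvd.dvd.mul_left (kraw_congr p n s k hp hodd hs (Or.inr this)) _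
    · push_neg at hA
      have : k < p := by
        have : (k : ℝ) < p := by linarith
        exact_mod_cast this
      exact Dvd.dvd.mul_left (kraw_congr p n s k hp hodd hs (Or.inl this)) _
  -- step 5 : conclusion
  have hp' : Prime (p : ℤ) := Nat.prime_iff_prime_int.mp hp
  have hdvd2 : (p : ℤ) ∣ (fb (F (s + 2*p)) - fb (F s)) := by
    rcases hp'.dvd_mul.mp hdvd with h | h
    · exfalso
      have h2 : (p : ℤ) ∣ 2 := hp'.dvd_of_dvd_pow h
      have hpp : p ∣ 2 := by exact_mod_cast h2
      have := (Nat.prime_dvd_prime_iff_eq hp Nat.prime_two).mp hpp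
      rw [this] at hodd
      exact (by decide : ¬ Odd 2) hodd
    · exact h
  by_contra hne
  have hdne : fb (F (s + 2*p)) - fb (F s) = 1 ∨ fb (F (s + 2*p)) - fb (F s) = -1 := by
    cases h1 : F s <;> cases h2 : F (s + 2*p) <;> simp [fb, h1, h2] at hne ⊢
  have : (p : ℤ) ∣ 1 := by
    rcases hdne with h | h
    · rw [h] at hdvd2; exact hdvd2
    · rw [h] at hdvd2; exact (dvd_neg).mp hdvd2
  have hple : (p : ℤ) ≤ 1 := Int.le_of_dvd one_pos this
  have := hp.one_lt
  omega

end SymXOR
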